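/- Let q = p^r > 3 with p an odd prime, let t(x) = x + ∑_{k=0}^{q-2} x^k ∈ F_q[x], let f_2(x_1,x_2) be the reduced form of t(x_1^{q-2} + x_2^{q-2}), and let f_3(x_1,x_2,x_3) be the reduced form of t(f_2^{q-2} + x_3^{q-2}). Then f_3 has total degree 3(q-2) (and is a local permutation polynomial of maximum degree); moreover its unique monomial of degree 3(q-2) is −4·x_1^{q-2} x_2^{q-2} x_3^{q-2}. -/

import Mathlib

open Finset

set_option linter.unusedSectionVars false

section LPPAux

variable {F : Type*} [Field F] [Fintype F] [DecidableEq F]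

/-- The function induced by `t`: swaps 0 and 1, fixes everything else. -/
def lppTf (F : Type*) [Field F] [DecidableEq F] (a : F) : F :=
  if a = 0 then 1 else if a = 1 then 0 else a

lemma lppTf_eq (a : F) :
    lppTf F a = a + (if a = 0 then 1 else 0) - (if a = 1 then 1 else 0) := by
  unfold lppTf
  by_cases h0 : a = 0
  · subst h0; simp
  · by_cases h1 : a = 1
    · subst h1; simp
    · simp [h0, h1]

lemma lppTf_invol : Function.Involutive (lppTf F) := by
  intro a
  unfold lppTf
  by_cases h0 : a = 0
  · subst h0; simp
  · by_cases h1 : a = 1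
    · subst h1; simp
    · simp [h0, h1]

lemma lppTf_inv (a : F) : (lppTf F a)⁻¹ = lppTf F a⁻¹ := by
  unfold lppTf
  by_cases h0 : a = 0
  · subst h0; simp
  · by_cases h1 : a = 1
    · subst h1; simp
    · have h0' : a⁻¹ ≠ 0 := inv_ne_zero h0
      have h1' : a⁻¹ ≠ 1 := by
        intro h; exact h1 (by rw [← inv_inv a, h, inv_one])
      simp [h0, h1, h0', h1']

lemma sum_pow_eq (hq : 2 ≤ Fintype.card F) {m : ℕ} (hm : m ≤ 2 * Fintype.card F - 3) :
    ∑ a : F, a ^ m = if m = Fintype.card F - 1 then (-1 : F) else 0 := by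
  set q := Fintype.card F with hqdef
  rcases lt_trichotomy m (q - 1) with h | h | h
  · rw [if_neg (by omega)]
    exact FiniteField.sum_pow_lt_card_sub_one F m h
  · rw [if_pos h]
    have hpt : ∀ a : F, a ^ m = 1 - (if a = 0 then 1 else 0) := by
      intro a
      by_cases ha : a = 0
      · subst ha; rw [zero_pow (by omega)]; simp
      · rw [h, FiniteField.pow_card_sub_one_eq_one a ha]; simp [ha]
    rw [Finset.sum_congr rfl (fun a _ => hpt a), Finset.sum_sub_distrib,
      Finset.sum_const, Finset.sum_ite_eq' Finset.univ (0 : F) (fun _ => (1 : F))]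
    simp [hqdef, FiniteField.cast_card_eq_zero]
  · have hk1 : 1 ≤ m - (q - 1) := by omega
    have hk2 : m - (q - 1) < q - 1 := by omega
    have hpt : ∀ a : F, a ^ m = a ^ (m - (q - 1)) := by
      intro a
      by_cases ha : a = 0
      · subst ha; rw [zero_pow (by omega), zero_pow (by omega)]
      · have : m = (m - (q - 1)) + (q - 1) := by omega
        conv_lhs => rw [this, pow_add, FiniteField.pow_card_sub_one_eq_one a ha, mul_one]
    rw [Finset.sum_congr rfl (fun a _ => hpt a), if_neg (by omega)]
    exact FiniteField.sum_pow_lt_card_sub_one F _ hk2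

lemma sum_pow_small (hq : 5 ≤ Fintype.card F) {k : ℕ} (hk : k ≤ 3) :
    ∑ a : F, a ^ k = 0 := by
  rw [sum_pow_eq (by omega) (by omega), if_neg (by omega)]

lemma sum_inv_comp {M : Type*} [AddCommMonoid M] (f : F → M) :
    ∑ a : F, f a⁻¹ = ∑ a : F, f a :=
  Equiv.sum_comp (Equiv.inv F) f

lemma sum_inv_pow_small (hq : 5 ≤ Fintype.card F) {k : ℕ} (hk : k ≤ 3) :
    ∑ a : F, (a⁻¹) ^ k = 0 := by
  rw [sum_inv_comp (fun a => a ^ k)]; exact sum_pow_small hq hk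

lemma pow_qsub2 (hq : 3 ≤ Fintype.card F) (a : F) :
    a ^ (Fintype.card F - 2) = a⁻¹ := by
  by_cases ha : a = 0
  · subst ha; rw [zero_pow (by omega), inv_zero]
  · have h1 : a ^ (Fintype.card F - 1) = 1 := FiniteField.pow_card_sub_one_eq_one a ha
    have h2 : Fintype.card F - 1 = (Fintype.card F - 2) + 1 := by omega
    rw [h2, pow_succ] at h1
    field_simp
    linear_combination h1

lemma eval_t (hq : 2 ≤ Fintype.card F) (a : F) :
    Polynomial.eval a
      (Polynomial.X + ∑ k ∈ Finset.range (Fintype.card F - 1), Polynomial.X ^ k) =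
      lppTf F a := by
  set q := Fintype.card F with hqdef
  rw [Polynomial.eval_add, Polynomial.eval_X, Polynomial.eval_finset_sum]
  simp only [Polynomial.eval_pow, Polynomial.eval_X]
  unfold lppTf
  by_cases h0 : a = 0
  · subst h0
    rw [if_pos rfl]
    have : ∀ k ∈ Finset.range (q - 1), (0 : F) ^ k = if k = 0 then 1 else 0 := by
      intro k _
      by_cases hk : k = 0
      · subst hk; simp
      · rw [zero_pow hk, if_neg hk]
    rw [Finset.sum_congr rfl this, Finset.sum_ite_eq' (Finset.range (q - 1)) 0 (fun _ => (1:F))]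
    rw [if_pos (Finset.mem_range.mpr (by omega))]
    ring
  · by_cases h1 : a = 1
    · subst h1
      rw [if_neg h0, if_pos rfl]
      simp only [one_pow, Finset.sum_const, Finset.card_range, nsmul_eq_mul, mul_one]
      have : ((q - 1 : ℕ) : F) = (q : F) - 1 := by
        rw [Nat.cast_sub (by omega)]; simp
      rw [this, hqdef, FiniteField.cast_card_eq_zero]
      ring
    · rw [if_neg h0, if_neg h1]
      rw [geom_sum_eq h1]
      rw [FiniteField.pow_card_sub_one_eq_one a h0]
      simp


/-- The triple character sum attached to `f₃`. -/
def lppS (F : Type*) [Field F] [Fintype F] [DecidableEq F] (e₀ e₁ e₂ : ℕ) : F :=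
  ∑ a : F, ∑ b : F,
    (∑ c : F, lppTf F ((lppTf F (a⁻¹ + b⁻¹))⁻¹ + c⁻¹) * c ^ e₂) * (a ^ e₀ * b ^ e₁)

lemma lppJ (hq : 5 ≤ Fintype.card F) (K : F) {e : ℕ} (he : e ≤ 3) :
    ∑ c : F, lppTf F (K + c⁻¹) * c ^ e
      = (if e = 1 then (-1 : F) else 0) + ((-K⁻¹) ^ e - ((1 - K)⁻¹) ^ e) := by
  have hc0 : ∀ c : F, (K + c⁻¹ = 0) = (c = (-K)⁻¹) := by
    intro c
    apply propext
    have h1 : K + c⁻¹ = 0 ↔ c⁻¹ = -K := by constructor <;> intro h <;> linear_combination h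
    rw [h1, inv_eq_iff_eq_inv]
  have hc1 : ∀ c : F, (K + c⁻¹ = 1) = (c = (1 - K)⁻¹) := by
    intro c
    apply propext
    have h1 : K + c⁻¹ = 1 ↔ c⁻¹ = 1 - K := by constructor <;> intro h <;> linear_combination h
    rw [h1, inv_eq_iff_eq_inv]
  have hpt : ∀ c : F, lppTf F (K + c⁻¹) * c ^ e
      = (K * c ^ e + c⁻¹ * c ^ e)
        + ((if c = (-K)⁻¹ then c ^ e else 0) - (if c = (1 - K)⁻¹ then c ^ e else 0)) := by
    intro c
    rw [lppTf_eq]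
    simp only [hc0 c, hc1 c]
    rw [sub_mul, add_mul, add_mul, ite_mul, ite_mul, one_mul, zero_mul]
    ring
  rw [Finset.sum_congr rfl (fun c _ => hpt c), Finset.sum_add_distrib,
    Finset.sum_add_distrib, Finset.sum_sub_distrib,
    Finset.sum_ite_eq' Finset.univ ((-K)⁻¹) (fun c => c ^ e),
    Finset.sum_ite_eq' Finset.univ ((1 - K)⁻¹) (fun c => c ^ e),
    if_pos (Finset.mem_univ _), if_pos (Finset.mem_univ _)]
  have hK : ∑ c : F, K * c ^ e = 0 := by
    rw [← Finset.mul_sum, sum_pow_small hq he, mul_zero]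
  have hce : ∑ c : F, c⁻¹ * c ^ e = if e = 1 then (-1 : F) else 0 := by
    have hpt2 : ∀ c : F, c⁻¹ * c ^ e = c ^ (Fintype.card F - 2 + e) := by
      intro c; rw [pow_add, pow_qsub2 (by omega) c]
    rw [Finset.sum_congr rfl (fun c _ => hpt2 c), sum_pow_eq (by omega) (by omega)]
    by_cases he1 : e = 1
    · rw [if_pos (by omega), if_pos he1]
    · rw [if_neg (by omega), if_neg he1]
  rw [hK, hce, inv_neg, zero_add]


lemma lpp_phi (hq : 5 ≤ Fintype.card F) {e : ℕ} (he : 1 ≤ e) (A : F) :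
    (-(lppTf F A)) ^ e - ((1 - lppTf F A⁻¹)⁻¹) ^ e
      = ((-A) ^ e - (A * (A - 1)⁻¹) ^ e)
        + ((if A = 0 then (-1 : F) ^ e else 0) + (if A = 1 then (-1 - (-1 : F) ^ e) else 0)) := by
  by_cases h0 : A = 0
  · subst h0
    simp [lppTf, zero_pow (by omega : e ≠ 0)]
  · by_cases h1 : A = 1
    · subst h1
      simp [lppTf, zero_pow (by omega : e ≠ 0)]
    · have hA1 : A - 1 ≠ 0 := sub_ne_zero.mpr h1
      have hi0 : A⁻¹ ≠ 0 := inv_ne_zero h0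
      have hi1 : A⁻¹ ≠ 1 := by
        intro h; exact h1 (by rw [← inv_inv A, h, inv_one])
      have hTf1 : lppTf F A = A := by simp [lppTf, h0, h1]
      have hTf2 : lppTf F A⁻¹ = A⁻¹ := by simp [lppTf, hi0, hi1]
      have hkey : (1 - A⁻¹)⁻¹ = A * (A - 1)⁻¹ := by
        rw [show (1 : F) - A⁻¹ = (A - 1) * A⁻¹ by field_simp, mul_inv, inv_inv]
        ring
      rw [hTf1, hTf2, hkey, if_neg h0, if_neg h1]
      ring

lemma sum_rho_pow (hq : 5 ≤ Fintype.card F) {e : ℕ} (he : 1 ≤ e) (he3 : e ≤ 3) :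
    ∑ u : F, (u * (u - 1)⁻¹) ^ e = -1 := by
  set τ : F → F := fun u => if u = 1 then 1 else u * (u - 1)⁻¹ with hτ
  have hno1 : ∀ u : F, u ≠ 1 → u * (u - 1)⁻¹ ≠ 1 := by
    intro u hu1 h
    have hu : u - 1 ≠ 0 := sub_ne_zero.mpr hu1
    have : u = u - 1 := by
      field_simp at h
      exact h
    exact one_ne_zero (α := F) (by linear_combination this)
  have hinvol : Function.Involutive τ := by
    intro u
    by_cases h1 : u = 1
    · simp [hτ, h1]
    · have hu : u - 1 ≠ 0 := sub_ne_zero.mpr h1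
      have hv1 : u * (u - 1)⁻¹ ≠ 1 := hno1 u h1
      simp only [hτ, if_neg h1, if_neg hv1]
      have hden : u * (u - 1)⁻¹ - 1 = (u - 1)⁻¹ := by
        field_simp
        ring
      rw [hden, inv_inv]
      field_simp
  have hpt : ∀ u : F, (u * (u - 1)⁻¹) ^ e = (τ u) ^ e - (if u = 1 then 1 else 0) := by
    intro u
    by_cases h1 : u = 1
    · subst h1
      simp [hτ, zero_pow (by omega : e ≠ 0)]
    · simp [hτ, h1]
  rw [Finset.sum_congr rfl (fun u _ => hpt u), Finset.sum_sub_distrib]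
  have h2 : ∑ u : F, (τ u) ^ e = ∑ u : F, u ^ e :=
    Equiv.sum_comp (hinvol.toPerm τ) (fun u => u ^ e)
  rw [h2, sum_pow_small hq he3,
    Finset.sum_ite_eq' Finset.univ (1 : F) (fun _ => (1 : F)), if_pos (Finset.mem_univ _)]
  ring

lemma sum_inv_eq_zero (hq : 5 ≤ Fintype.card F) : ∑ a : F, a⁻¹ = 0 := by
  have := sum_inv_pow_small (F := F) hq (k := 1) (by norm_num)
  simpa using this

lemma conv_inv (hq : 5 ≤ Fintype.card F) (u : F) :
    ∑ a : F, a⁻¹ * (u - a)⁻¹ = -2 * (u⁻¹) ^ 2 := by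
  have hsub : ∑ a : F, (u - a)⁻¹ = 0 := by
    exact (Fintype.sum_equiv (Equiv.subLeft u) (fun a => (u - a)⁻¹) (fun a => a⁻¹)
      (fun a => rfl)).trans (sum_inv_eq_zero hq)
  by_cases hu : u = 0
  · subst hu
    have hpt : ∀ a : F, a⁻¹ * (0 - a)⁻¹ = -((a⁻¹) ^ 2) := by
      intro a; rw [zero_sub, inv_neg]; ring
    rw [Finset.sum_congr rfl (fun a _ => hpt a), Finset.sum_neg_distrib,
      sum_inv_pow_small hq (by norm_num : 2 ≤ 3)]
    simp
  · have hpt : ∀ a : F, a⁻¹ * (u - a)⁻¹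
        = (u⁻¹ * a⁻¹ + u⁻¹ * (u - a)⁻¹)
          - ((if a = 0 then (u⁻¹) ^ 2 else 0) + (if a = u then (u⁻¹) ^ 2 else 0)) := by
      intro a
      by_cases h0 : a = 0
      · subst h0
        rw [if_pos rfl, if_neg (fun h => hu h.symm)]
        simp
        ring
      · by_cases h2 : a = u
        · subst h2
          rw [if_neg h0, if_pos rfl, sub_self, inv_zero]
          ring
        · have hua : u - a ≠ 0 := sub_ne_zero.mpr (fun h => h2 h.symm)
          rw [if_neg h0, if_neg h2]
          field_simp
          ring
    rw [Finset.sum_congr rfl (fun a _ => hpt a), Finset.sum_sub_distrib,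
      Finset.sum_add_distrib, Finset.sum_add_distrib, ← Finset.mul_sum, ← Finset.mul_sum,
      sum_inv_eq_zero hq, hsub,
      Finset.sum_ite_eq' Finset.univ (0 : F) (fun _ => (u⁻¹) ^ 2),
      Finset.sum_ite_eq' Finset.univ u (fun _ => (u⁻¹) ^ 2),
      if_pos (Finset.mem_univ _), if_pos (Finset.mem_univ _)]
    ring

lemma sum_recip_pair (hq : 5 ≤ Fintype.card F) : ∑ u : F, u⁻¹ * (u - 1)⁻¹ = 2 := by
  have hsub : ∑ u : F, (u - 1)⁻¹ = 0 := by
    exact (Fintype.sum_equiv (Equiv.subRight (1 : F)) (fun a => (a - 1)⁻¹) (fun a => a⁻¹)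
      (fun a => rfl)).trans (sum_inv_eq_zero hq)
  have hpt : ∀ u : F, u⁻¹ * (u - 1)⁻¹
      = ((u - 1)⁻¹ - u⁻¹) + ((if u = 0 then 1 else 0) + (if u = 1 then 1 else 0)) := by
    intro u
    by_cases h0 : u = 0
    · subst h0
      rw [if_pos rfl, if_neg (by norm_num)]
      simp
    · by_cases h1 : u = 1
      · subst h1
        rw [if_neg (by norm_num), if_pos rfl, sub_self, inv_zero]
        simp
      · have hu1 : u - 1 ≠ 0 := sub_ne_zero.mpr h1
        rw [if_neg h0, if_neg h1]
        field_simp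
        ring
  rw [Finset.sum_congr rfl (fun u _ => hpt u), Finset.sum_add_distrib,
    Finset.sum_sub_distrib, hsub, sum_inv_eq_zero hq, Finset.sum_add_distrib,
    Finset.sum_ite_eq' Finset.univ (0 : F) (fun _ => (1 : F)),
    Finset.sum_ite_eq' Finset.univ (1 : F) (fun _ => (1 : F)),
    if_pos (Finset.mem_univ _), if_pos (Finset.mem_univ _)]
  ring

lemma double_sum_inv (ψ : F → F) (e₀ e₁ : ℕ) :
    ∑ a : F, ∑ b : F, ψ (a⁻¹ + b⁻¹) * (a ^ e₀ * b ^ e₁)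
      = ∑ a : F, ∑ b : F, ψ (a + b) * ((a⁻¹) ^ e₀ * (b⁻¹) ^ e₁) := by
  have inner : ∀ a : F, ∑ b : F, ψ (a⁻¹ + b⁻¹) * (a ^ e₀ * b ^ e₁)
      = ∑ b : F, ψ (a⁻¹ + b) * (a ^ e₀ * (b⁻¹) ^ e₁) := by
    intro a
    calc ∑ b : F, ψ (a⁻¹ + b⁻¹) * (a ^ e₀ * b ^ e₁)
        = ∑ b : F, (fun x => ψ (a⁻¹ + x) * (a ^ e₀ * (x⁻¹) ^ e₁)) b⁻¹ := by
          refine Finset.sum_congr rfl fun b _ => ?_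
          simp only [inv_inv]
      _ = ∑ b : F, ψ (a⁻¹ + b) * (a ^ e₀ * (b⁻¹) ^ e₁) :=
          sum_inv_comp (fun x => ψ (a⁻¹ + x) * (a ^ e₀ * (x⁻¹) ^ e₁))
  rw [Finset.sum_congr rfl fun a _ => inner a]
  calc ∑ a : F, ∑ b : F, ψ (a⁻¹ + b) * (a ^ e₀ * (b⁻¹) ^ e₁)
      = ∑ a : F, (fun x => ∑ b : F, ψ (x + b) * ((x⁻¹) ^ e₀ * (b⁻¹) ^ e₁)) a⁻¹ := by
        refine Finset.sum_congr rfl fun a _ => ?_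
        simp only [inv_inv]
    _ = ∑ a : F, ∑ b : F, ψ (a + b) * ((a⁻¹) ^ e₀ * (b⁻¹) ^ e₁) :=
        sum_inv_comp (fun x => ∑ b : F, ψ (x + b) * ((x⁻¹) ^ e₀ * (b⁻¹) ^ e₁))

lemma lppS_master (hq : 5 ≤ Fintype.card F) {e₀ e₁ e₂ : ℕ}
    (h0 : e₀ ≤ 3) (h1 : e₁ ≤ 3) (h01 : e₀ + e₁ ≤ 2) (h2a : 1 ≤ e₂) (h2b : e₂ ≤ 3) :
    lppS F e₀ e₁ e₂
      = (∑ a : F, ∑ b : F, ((-(a + b)) ^ e₂ - ((a + b) * ((a + b) - 1)⁻¹) ^ e₂)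
          * ((a⁻¹) ^ e₀ * (b⁻¹) ^ e₁))
        + (-1 - (-1 : F) ^ e₂) * (∑ a : F, a ^ e₀ * ((1 - a⁻¹)⁻¹) ^ e₁) := by
  have hsummand : ∀ a b : F,
      (∑ c : F, lppTf F ((lppTf F (a⁻¹ + b⁻¹))⁻¹ + c⁻¹) * c ^ e₂) * (a ^ e₀ * b ^ e₁)
      = (if e₂ = 1 then (-1 : F) else 0) * (a ^ e₀ * b ^ e₁)
        + (((-(a⁻¹ + b⁻¹)) ^ e₂ - ((a⁻¹ + b⁻¹) * ((a⁻¹ + b⁻¹) - 1)⁻¹) ^ e₂)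
            * (a ^ e₀ * b ^ e₁)
        + ((if a⁻¹ + b⁻¹ = 0 then (-1 : F) ^ e₂ else 0) * (a ^ e₀ * b ^ e₁)
        + (if a⁻¹ + b⁻¹ = 1 then (-1 - (-1 : F) ^ e₂) else 0) * (a ^ e₀ * b ^ e₁))) := by
    intro a b
    rw [lppJ hq _ h2b, inv_inv, lppTf_inv, lpp_phi hq h2a (a⁻¹ + b⁻¹)]
    ring
  unfold lppS
  rw [Finset.sum_congr rfl fun a _ => Finset.sum_congr rfl fun b _ => hsummand a b]
  simp only [Finset.sum_add_distrib]
  have hTC : ∑ a : F, ∑ b : F, (if e₂ = 1 then (-1 : F) else 0) * (a ^ e₀ * b ^ e₁) = 0 := by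
    have inner : ∀ a : F, ∑ b : F, (if e₂ = 1 then (-1 : F) else 0) * (a ^ e₀ * b ^ e₁)
        = 0 := by
      intro a
      have : ∑ b : F, (if e₂ = 1 then (-1 : F) else 0) * (a ^ e₀ * b ^ e₁)
          = ((if e₂ = 1 then (-1 : F) else 0) * a ^ e₀) * ∑ b : F, b ^ e₁ := by
        rw [Finset.mul_sum]
        exact Finset.sum_congr rfl fun b _ => by ring
      rw [this, sum_pow_small hq h1, mul_zero]
    rw [Finset.sum_congr rfl fun a _ => inner a, Finset.sum_const, smul_zero]
  have hT0 : ∑ a : F, ∑ b : F,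
      (if a⁻¹ + b⁻¹ = 0 then (-1 : F) ^ e₂ else 0) * (a ^ e₀ * b ^ e₁) = 0 := by
    have inner : ∀ a : F, ∑ b : F,
        (if a⁻¹ + b⁻¹ = 0 then (-1 : F) ^ e₂ else 0) * (a ^ e₀ * b ^ e₁)
        = (-1 : F) ^ e₂ * (a ^ e₀ * (-a) ^ e₁) := by
      intro a
      have hcond : ∀ b : F, (a⁻¹ + b⁻¹ = 0) = (b = -a) := by
        intro b
        apply propext
        have h : a⁻¹ + b⁻¹ = 0 ↔ b⁻¹ = -a⁻¹ := by
          constructor <;> intro h <;> linear_combination h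
        rw [h, ← inv_neg, inv_inj]
      simp only [hcond, ite_mul, zero_mul]
      rw [Finset.sum_ite_eq' Finset.univ (-a) (fun b => (-1 : F) ^ e₂ * (a ^ e₀ * b ^ e₁)),
        if_pos (Finset.mem_univ _)]
    rw [Finset.sum_congr rfl fun a _ => inner a]
    have hpt : ∀ a : F, (-1 : F) ^ e₂ * (a ^ e₀ * (-a) ^ e₁)
        = ((-1 : F) ^ e₂ * (-1 : F) ^ e₁) * a ^ (e₀ + e₁) := by
      intro a
      rw [neg_pow, pow_add]
      ring
    rw [Finset.sum_congr rfl fun a _ => hpt a, ← Finset.mul_sum,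
      sum_pow_small hq (by omega), mul_zero]
  have hT1 : ∑ a : F, ∑ b : F,
      (if a⁻¹ + b⁻¹ = 1 then (-1 - (-1 : F) ^ e₂) else 0) * (a ^ e₀ * b ^ e₁)
      = (-1 - (-1 : F) ^ e₂) * ∑ a : F, a ^ e₀ * ((1 - a⁻¹)⁻¹) ^ e₁ := by
    have inner : ∀ a : F, ∑ b : F,
        (if a⁻¹ + b⁻¹ = 1 then (-1 - (-1 : F) ^ e₂) else 0) * (a ^ e₀ * b ^ e₁)
        = (-1 - (-1 : F) ^ e₂) * (a ^ e₀ * ((1 - a⁻¹)⁻¹) ^ e₁) := by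
      intro a
      have hcond : ∀ b : F, (a⁻¹ + b⁻¹ = 1) = (b = (1 - a⁻¹)⁻¹) := by
        intro b
        apply propext
        have h : a⁻¹ + b⁻¹ = 1 ↔ b⁻¹ = 1 - a⁻¹ := by
          constructor <;> intro h <;> linear_combination h
        rw [h, inv_eq_iff_eq_inv]
      simp only [hcond, ite_mul, zero_mul]
      rw [Finset.sum_ite_eq' Finset.univ ((1 - a⁻¹)⁻¹)
        (fun b => (-1 - (-1 : F) ^ e₂) * (a ^ e₀ * b ^ e₁)), if_pos (Finset.mem_univ _)]
    rw [Finset.sum_congr rfl fun a _ => inner a, ← Finset.mul_sum]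
  have hTψ := double_sum_inv (F := F)
    (fun A => (-A) ^ e₂ - (A * (A - 1)⁻¹) ^ e₂) e₀ e₁
  rw [hTC, hT0, hT1, hTψ]
  ring

lemma lppS_e2_zero (hq : 5 ≤ Fintype.card F) (e₀ e₁ : ℕ) : lppS F e₀ e₁ 0 = 0 := by
  unfold lppS
  have inner : ∀ a b : F,
      (∑ c : F, lppTf F ((lppTf F (a⁻¹ + b⁻¹))⁻¹ + c⁻¹) * c ^ 0) * (a ^ e₀ * b ^ e₁) = 0 := by
    intro a b
    rw [lppJ hq _ (by norm_num)]
    norm_num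
  rw [Finset.sum_congr rfl fun a _ => Finset.sum_congr rfl fun b _ => inner a b]
  simp

lemma lppS_swap (e₀ e₁ e₂ : ℕ) : lppS F e₀ e₁ e₂ = lppS F e₁ e₀ e₂ := by
  unfold lppS
  rw [Finset.sum_comm]
  refine Finset.sum_congr rfl fun a _ => Finset.sum_congr rfl fun b _ => ?_
  rw [add_comm (b⁻¹) (a⁻¹)]
  ring

lemma lppS_e0_zero (hq : 5 ≤ Fintype.card F) {e₁ e₂ : ℕ}
    (h1 : e₁ ≤ 2) (h2a : 1 ≤ e₂) (h2b : e₂ ≤ 3) : lppS F 0 e₁ e₂ = 0 := by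
  rw [lppS_master hq (by norm_num) (by omega) (by omega) h2a h2b]
  have hψsum : ∑ u : F, ((-u) ^ e₂ - (u * (u - 1)⁻¹) ^ e₂) = 1 := by
    rw [Finset.sum_sub_distrib]
    have hneg : ∑ u : F, (-u) ^ e₂ = 0 := by
      have : ∀ u : F, (-u) ^ e₂ = (-1 : F) ^ e₂ * u ^ e₂ := fun u => by rw [neg_pow]
      rw [Finset.sum_congr rfl fun u _ => this u, ← Finset.mul_sum,
        sum_pow_small hq h2b, mul_zero]
    rw [hneg, sum_rho_pow hq h2a h2b]
    ring
  have hmain : ∑ a : F, ∑ b : F, ((-(a + b)) ^ e₂ - ((a + b) * ((a + b) - 1)⁻¹) ^ e₂)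
      * ((a⁻¹) ^ 0 * (b⁻¹) ^ e₁) = 0 := by
    rw [Finset.sum_comm]
    have inner : ∀ b : F, ∑ a : F, ((-(a + b)) ^ e₂ - ((a + b) * ((a + b) - 1)⁻¹) ^ e₂)
        * ((a⁻¹) ^ 0 * (b⁻¹) ^ e₁) = (b⁻¹) ^ e₁ := by
      intro b
      have step : ∑ a : F, ((-(a + b)) ^ e₂ - ((a + b) * ((a + b) - 1)⁻¹) ^ e₂)
          * ((a⁻¹) ^ 0 * (b⁻¹) ^ e₁)
          = (∑ a : F, ((-(a + b)) ^ e₂ - ((a + b) * ((a + b) - 1)⁻¹) ^ e₂)) * (b⁻¹) ^ e₁ := by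
        rw [Finset.sum_mul]
        exact Finset.sum_congr rfl fun a _ => by rw [pow_zero]; ring
      rw [step]
      have hshift : ∑ a : F, ((-(a + b)) ^ e₂ - ((a + b) * ((a + b) - 1)⁻¹) ^ e₂)
          = ∑ u : F, ((-u) ^ e₂ - (u * (u - 1)⁻¹) ^ e₂) := by
        exact Fintype.sum_equiv (Equiv.addRight b)
          (fun a => ((-(a + b)) ^ e₂ - ((a + b) * ((a + b) - 1)⁻¹) ^ e₂))
          (fun u => ((-u) ^ e₂ - (u * (u - 1)⁻¹) ^ e₂)) (fun a => rfl)
      rw [hshift, hψsum, one_mul]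
    rw [Finset.sum_congr rfl fun b _ => inner b]
    exact sum_inv_pow_small hq (by omega)
  have hsig : ∑ a : F, a ^ 0 * ((1 - a⁻¹)⁻¹) ^ e₁ = 0 := by
    have step : ∑ a : F, a ^ 0 * ((1 - a⁻¹)⁻¹) ^ e₁ = ∑ a : F, ((1 - a⁻¹)⁻¹) ^ e₁ :=
      Finset.sum_congr rfl fun a _ => by rw [pow_zero, one_mul]
    rw [step, sum_inv_comp (fun x => ((1 - x)⁻¹) ^ e₁)]
    have step2 : ∑ a : F, ((1 - a)⁻¹) ^ e₁ = ∑ a : F, (a⁻¹) ^ e₁ :=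
      Fintype.sum_equiv (Equiv.subLeft (1 : F)) (fun a => ((1 - a)⁻¹) ^ e₁)
        (fun a => (a⁻¹) ^ e₁) (fun a => rfl)
    rw [step2]
    exact sum_inv_pow_small hq (by omega)
  rw [hmain, hsig, mul_zero, add_zero]

lemma lppS_111 (hq : 5 ≤ Fintype.card F) : lppS F 1 1 1 = 4 := by
  rw [lppS_master hq (by norm_num) (by norm_num) (by norm_num) (by norm_num) (by norm_num)]
  have hsig : (-1 - (-1 : F) ^ 1) * (∑ a : F, a ^ 1 * ((1 - a⁻¹)⁻¹) ^ 1) = 0 := by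
    norm_num
  have hinv : ∑ x : F, x⁻¹ = 0 := sum_inv_eq_zero hq
  have hmain : ∑ a : F, ∑ b : F, ((-(a + b)) ^ 1 - ((a + b) * ((a + b) - 1)⁻¹) ^ 1)
      * ((a⁻¹) ^ 1 * (b⁻¹) ^ 1) = 4 := by
    have hsplit : ∀ a b : F, ((-(a + b)) ^ 1 - ((a + b) * ((a + b) - 1)⁻¹) ^ 1)
        * ((a⁻¹) ^ 1 * (b⁻¹) ^ 1)
        = (-(a * a⁻¹) * b⁻¹ + (-a⁻¹) * (b * b⁻¹))
          - ((a + b) * ((a + b) - 1)⁻¹) * (a⁻¹ * b⁻¹) := by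
      intro a b
      ring
    rw [Finset.sum_congr rfl fun a _ => Finset.sum_congr rfl fun b _ => hsplit a b]
    simp only [Finset.sum_sub_distrib]
    have hT1 : ∑ a : F, ∑ b : F, (-(a * a⁻¹) * b⁻¹ + (-a⁻¹) * (b * b⁻¹)) = 0 := by
      have inner : ∀ a : F, ∑ b : F, (-(a * a⁻¹) * b⁻¹ + (-a⁻¹) * (b * b⁻¹))
          = (-a⁻¹) * ∑ b : F, (b * b⁻¹) := by
        intro a
        rw [Finset.sum_add_distrib, ← Finset.mul_sum, ← Finset.mul_sum, hinv, mul_zero,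
          zero_add]
      rw [Finset.sum_congr rfl fun a _ => inner a, ← Finset.sum_mul]
      have : ∑ a : F, -a⁻¹ = 0 := by rw [Finset.sum_neg_distrib, hinv, neg_zero]
      rw [this, zero_mul]
    have hT2 : ∑ a : F, ∑ b : F, ((a + b) * ((a + b) - 1)⁻¹) * (a⁻¹ * b⁻¹) = -4 := by
      have inner : ∀ a : F, ∑ b : F, ((a + b) * ((a + b) - 1)⁻¹) * (a⁻¹ * b⁻¹)
          = ∑ u : F, (u * (u - 1)⁻¹) * (a⁻¹ * (u - a)⁻¹) := by
        intro a
        refine Fintype.sum_equiv (Equiv.addLeft a)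
          (fun b => ((a + b) * ((a + b) - 1)⁻¹) * (a⁻¹ * b⁻¹))
          (fun u => (u * (u - 1)⁻¹) * (a⁻¹ * (u - a)⁻¹)) (fun b => ?_)
        simp only [Equiv.coe_addLeft]
        rw [add_sub_cancel_left]
      rw [Finset.sum_congr rfl fun a _ => inner a, Finset.sum_comm]
      have inner2 : ∀ u : F, ∑ a : F, (u * (u - 1)⁻¹) * (a⁻¹ * (u - a)⁻¹)
          = (u * (u - 1)⁻¹) * (-2 * (u⁻¹) ^ 2) := by
        intro u
        rw [← Finset.mul_sum, conv_inv hq u]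
      rw [Finset.sum_congr rfl fun u _ => inner2 u]
      have hpt : ∀ u : F, (u * (u - 1)⁻¹) * (-2 * (u⁻¹) ^ 2) = -2 * (u⁻¹ * (u - 1)⁻¹) := by
        intro u
        by_cases hu : u = 0
        · subst hu; simp
        · by_cases hu1 : u = 1
          · subst hu1; simp
          · have h1 : u - 1 ≠ 0 := sub_ne_zero.mpr hu1
            field_simp
      rw [Finset.sum_congr rfl fun u _ => hpt u, ← Finset.mul_sum, sum_recip_pair hq]
      norm_num
    rw [hT1, hT2]
    norm_num
  rw [hmain, hsig, add_zero]

def lppEquiv3 (F : Type*) : (Fin 3 → F) ≃ F × F × F where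
  toFun x := (x 0, x 1, x 2)
  invFun p := ![p.1, p.2.1, p.2.2]
  left_inv x := by
    funext i
    fin_cases i <;> rfl
  right_inv p := rfl

lemma sum_fin3 {M : Type*} [AddCommMonoid M] (H : F → F → F → M) :
    ∑ x : Fin 3 → F, H (x 0) (x 1) (x 2) = ∑ a : F, ∑ b : F, ∑ c : F, H a b c := by
  rw [Fintype.sum_equiv (lppEquiv3 F) (fun x => H (x 0) (x 1) (x 2))
    (fun p => H p.1 p.2.1 p.2.2) (fun x => rfl)]
  rw [Fintype.sum_prod_type]
  exact Finset.sum_congr rfl fun a _ => Fintype.sum_prod_type _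

open MvPolynomial in
lemma lpp_coeff_formula (hq : 5 ≤ Fintype.card F) (f : MvPolynomial (Fin 3) F)
    (hdeg : ∀ i, f.degreeOf i < Fintype.card F) (e : Fin 3 → ℕ) (he : ∀ i, e i ≤ 3) :
    f.coeff (Finsupp.equivFunOnFinite.symm fun i => Fintype.card F - 1 - e i)
      = - ∑ x : Fin 3 → F, eval x f * ∏ i, (x i) ^ (e i) := by
  set q := Fintype.card F with hqdef
  set D : Fin 3 →₀ ℕ := Finsupp.equivFunOnFinite.symm (fun i => q - 1 - e i) with hD
  have hDi : ∀ i, D i = q - 1 - e i := fun i => rfl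
  have hstep1 : ∑ x : Fin 3 → F, eval x f * ∏ i, (x i) ^ (e i)
      = ∑ d ∈ f.support, f.coeff d * ∑ x : Fin 3 → F, ∏ i, (x i) ^ (d i + e i) := by
    simp only [eval_eq', Finset.sum_mul]
    rw [Finset.sum_comm]
    refine Finset.sum_congr rfl fun d _ => ?_
    rw [Finset.mul_sum]
    refine Finset.sum_congr rfl fun x _ => ?_
    rw [mul_assoc, ← Finset.prod_mul_distrib]
    congr 1
    exact Finset.prod_congr rfl fun i _ => (pow_add _ _ _).symm
  have hprod : ∀ d : Fin 3 →₀ ℕ, ∑ x : Fin 3 → F, ∏ i, (x i) ^ (d i + e i)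
      = ∏ i, ∑ a : F, a ^ (d i + e i) :=
    fun d => (Fintype.prod_sum (fun i (a : F) => a ^ (d i + e i))).symm
  have hd_le : ∀ d ∈ f.support, ∀ i, d i ≤ q - 1 := by
    intro d hd i
    have h1 : d i ≤ f.degreeOf i := by
      rw [degreeOf_eq_sup]
      exact Finset.le_sup (f := fun m => m i) hd
    have := hdeg i
    omega
  have hfac : ∀ d ∈ f.support,
      (∏ i, ∑ a : F, a ^ (d i + e i)) = if d = D then (-1 : F) else 0 := by
    intro d hd
    have hpow : ∀ i, ∑ a : F, a ^ (d i + e i) = if d i + e i = q - 1 then (-1 : F) else 0 := by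
      intro i
      exact sum_pow_eq (by omega) (by have := hd_le d hd i; have := he i; omega)
    rw [Finset.prod_congr rfl fun i _ => hpow i]
    by_cases hall : ∀ i, d i + e i = q - 1
    · rw [Finset.prod_congr rfl fun i _ => if_pos (hall i), Finset.prod_const, if_pos]
      · norm_num [Finset.card_univ]
      · ext i
        rw [hDi i]
        have := hall i
        have := he i
        omega
    · have hne : d ≠ D := by
        intro hcontra
        apply hall
        intro i
        rw [hcontra, hDi i]
        have := he i
        omega
      rw [if_neg hne]
      push_neg at hall
      obtain ⟨i, hi⟩ := hall
      exact Finset.prod_eq_zero (Finset.mem_univ i) (if_neg hi)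
  have hsum : ∑ x : Fin 3 → F, eval x f * ∏ i, (x i) ^ (e i) = - f.coeff D := by
    rw [hstep1, Finset.sum_congr rfl (fun d hd => by rw [hprod d, hfac d hd])]
    simp only [mul_ite, mul_neg_one, mul_zero]
    rw [Finset.sum_ite_eq' f.support D (fun d => - f.coeff d)]
    by_cases hDmem : D ∈ f.support
    · rw [if_pos hDmem]
    · rw [if_neg hDmem, notMem_support_iff.mp hDmem, neg_zero]
  rw [hsum, neg_neg]

end LPPAux

open MvPolynomial

/-- For `q = p^r > 3` with `p` an odd prime, `t(x) = x + ∑_{k=0}^{q-2} x^k`, `f₂` the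
reduced form of `t(x₁^{q-2} + x₂^{q-2})` and `f₃` the reduced form of
`t(f₂^{q-2} + x₃^{q-2})`, the polynomial `f₃` has total degree `3(q-2)`, is a local
permutation polynomial, and its unique monomial of degree `3(q-2)` is
`-4·x₁^{q-2} x₂^{q-2} x₃^{q-2}`. -/
theorem lpp_three_vars_max_degree {p r : ℕ} (hp : p.Prime) (hodd : p ≠ 2) (hr : 0 < r)
    {F : Type*} [Field F] [Fintype F] [DecidableEq F]
    (hF : Fintype.card F = p ^ r) (hq : 3 < Fintype.card F)
    (t : Polynomial F)
    (ht : t = Polynomial.X + ∑ k ∈ Finset.range (Fintype.card F - 1), Polynomial.X ^ k)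
    (f₂ : MvPolynomial (Fin 2) F)
    (hred₂ : ∀ i : Fin 2, f₂.degreeOf i < Fintype.card F)
    (heq₂ : ∀ x : Fin 2 → F, eval x f₂ =
      Polynomial.eval ((x 0) ^ (Fintype.card F - 2) + (x 1) ^ (Fintype.card F - 2)) t)
    (f₃ : MvPolynomial (Fin 3) F)
    (hred₃ : ∀ i : Fin 3, f₃.degreeOf i < Fintype.card F)
    (heq₃ : ∀ x : Fin 3 → F, eval x f₃ =
      Polynomial.eval ((eval ![x 0, x 1] f₂) ^ (Fintype.card F - 2)
        + (x 2) ^ (Fintype.card F - 2)) t) :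
    f₃.totalDegree = 3 * (Fintype.card F - 2) ∧
    (∀ (i : Fin 3) (x : Fin 3 → F),
      Function.Bijective fun c : F => eval (Function.update x i c) f₃) ∧
    f₃.coeff (Finsupp.equivFunOnFinite.symm fun _ : Fin 3 => Fintype.card F - 2) = -4 ∧
    (∀ d : Fin 3 →₀ ℕ, (d.sum fun _ e => e) = 3 * (Fintype.card F - 2) →
      d ≠ Finsupp.equivFunOnFinite.symm (fun _ : Fin 3 => Fintype.card F - 2) →
      f₃.coeff d = 0) := by
  -- q ≥ 5 and q odd
  have hoddq : Odd (Fintype.card F) := by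
    rw [hF]; exact (hp.odd_of_ne_two hodd).pow
  have hq5 : 5 ≤ Fintype.card F := by
    obtain ⟨m, hm⟩ := hoddq
    omega
  -- -4 ≠ 0
  have h4 : (-4 : F) ≠ 0 := by
    intro h
    have h4' : ((4 : ℕ) : F) = 0 := by
      have h40 : (4 : F) = 0 := neg_eq_zero.mp h
      exact_mod_cast h40
    have hdvd : ringChar F ∣ 4 := (CharP.cast_eq_zero_iff F (ringChar F) 4).mp h4'
    have hdvdq : ringChar F ∣ Fintype.card F :=
      (CharP.cast_eq_zero_iff F (ringChar F) _).mp (FiniteField.cast_card_eq_zero F)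
    have hprime : (ringChar F).Prime := CharP.char_is_prime F (ringChar F)
    have h2 : ringChar F = 2 := by
      have hd2 : ringChar F ∣ 2 ^ 2 := by norm_num at hdvd ⊢; exact hdvd
      exact (Nat.prime_dvd_prime_iff_eq hprime Nat.prime_two).mp (hprime.dvd_of_dvd_pow hd2)
    rw [h2] at hdvdq
    obtain ⟨k, hk⟩ := hdvdq
    obtain ⟨m, hm⟩ := hoddq
    omega
  -- evaluation formulas
  have heval₂ : ∀ a b : F, eval ![a, b] f₂ = lppTf F (a⁻¹ + b⁻¹) := by
    intro a b
    rw [heq₂ ![a, b]]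
    simp only [Matrix.cons_val_zero, Matrix.cons_val_one, Matrix.head_cons]
    rw [pow_qsub2 (by omega) a, pow_qsub2 (by omega) b, ht, eval_t (by omega)]
  have heval₃ : ∀ y : Fin 3 → F,
      eval y f₃ = lppTf F ((lppTf F ((y 0)⁻¹ + (y 1)⁻¹))⁻¹ + (y 2)⁻¹) := by
    intro y
    rw [heq₃ y, heval₂ (y 0) (y 1), pow_qsub2 (by omega), pow_qsub2 (by omega), ht,
      eval_t (by omega)]
  -- bridge to lppS
  have hbridge : ∀ e : Fin 3 → ℕ,
      ∑ x : Fin 3 → F, eval x f₃ * ∏ i, (x i) ^ (e i) = lppS F (e 0) (e 1) (e 2) := by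
    intro e
    calc ∑ x : Fin 3 → F, eval x f₃ * ∏ i, (x i) ^ (e i)
        = ∑ x : Fin 3 → F,
            (fun a b c => lppTf F ((lppTf F (a⁻¹ + b⁻¹))⁻¹ + c⁻¹)
              * (a ^ e 0 * (b ^ e 1 * c ^ e 2))) (x 0) (x 1) (x 2) := by
          refine Finset.sum_congr rfl fun x _ => ?_
          rw [heval₃ x, Fin.prod_univ_three]
          ring
      _ = ∑ a : F, ∑ b : F, ∑ c : F,
            lppTf F ((lppTf F (a⁻¹ + b⁻¹))⁻¹ + c⁻¹) * (a ^ e 0 * (b ^ e 1 * c ^ e 2)) :=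
          sum_fin3 (fun a b c =>
            lppTf F ((lppTf F (a⁻¹ + b⁻¹))⁻¹ + c⁻¹) * (a ^ e 0 * (b ^ e 1 * c ^ e 2)))
      _ = lppS F (e 0) (e 1) (e 2) := by
          unfold lppS
          refine Finset.sum_congr rfl fun a _ => Finset.sum_congr rfl fun b _ => ?_
          rw [Finset.sum_mul]
          refine Finset.sum_congr rfl fun c _ => ?_
          ring
  have hcoeff : ∀ e : Fin 3 → ℕ, (∀ i, e i ≤ 3) →
      f₃.coeff (Finsupp.equivFunOnFinite.symm fun i => Fintype.card F - 1 - e i)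
        = - lppS F (e 0) (e 1) (e 2) := by
    intro e he
    rw [lpp_coeff_formula hq5 f₃ hred₃ e he, hbridge e]
  have hzeroS : ∀ e₀ e₁ e₂ : ℕ, e₀ + e₁ + e₂ ≤ 3 → (e₀ = 0 ∨ e₁ = 0 ∨ e₂ = 0) →
      lppS F e₀ e₁ e₂ = 0 := by
    intro e₀ e₁ e₂ htot hz
    by_cases h2 : e₂ = 0
    · subst h2; exact lppS_e2_zero hq5 _ _
    rcases hz with h | h | h
    · subst h; exact lppS_e0_zero hq5 (by omega) (by omega) (by omega)
    · subst h; rw [lppS_swap]; exact lppS_e0_zero hq5 (by omega) (by omega) (by omega)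
    · exact absurd h h2
  -- the top coefficient
  have hcoeffD : f₃.coeff (Finsupp.equivFunOnFinite.symm fun _ : Fin 3 =>
      Fintype.card F - 2) = -4 := by
    have h1 := hcoeff (fun _ => 1) (fun _ => by norm_num)
    rw [lppS_111 hq5] at h1
    have h2 : (fun _ : Fin 3 => Fintype.card F - 1 - 1) = (fun _ : Fin 3 =>
        Fintype.card F - 2) := by
      funext i; omega
    rw [h2] at h1
    exact h1
  -- sum of a finsupp over Fin 3
  have hdsum : ∀ dd : Fin 3 →₀ ℕ, (dd.sum fun _ e => e) = dd 0 + dd 1 + dd 2 := by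
    intro dd
    rw [Finsupp.sum_fintype _ _ (fun i => rfl), Fin.sum_univ_three]
  -- vanishing of coefficients of monomials with high degree and a zero pattern
  have hvanish : ∀ d : Fin 3 →₀ ℕ, (∀ i, d i ≤ Fintype.card F - 1) →
      (∃ i, d i + 1 ≤ Fintype.card F - 1 - 2 ∨ Fintype.card F - 1 ≤ d i) → True := fun _ _ _ => trivial
  clear hvanish
  have hgen : ∀ d : Fin 3 →₀ ℕ, (∀ i, d i ≤ Fintype.card F - 1) →
      ((Fintype.card F - 1 - d 0) + (Fintype.card F - 1 - d 1) + (Fintype.card F - 1 - d 2) ≤ 3) →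
      ((Fintype.card F - 1 - d 0) = 0 ∨ (Fintype.card F - 1 - d 1) = 0 ∨
        (Fintype.card F - 1 - d 2) = 0) →
      f₃.coeff d = 0 := by
    intro d hdle htot hz
    have heq : (Finsupp.equivFunOnFinite.symm fun i => Fintype.card F - 1 -
        (Fintype.card F - 1 - d i)) = d := by
      ext i
      show Fintype.card F - 1 - (Fintype.card F - 1 - d i) = d i
      have := hdle i
      omega
    have he3 : ∀ i : Fin 3, Fintype.card F - 1 - d i ≤ 3 := by
      intro i
      fin_cases i
      · show Fintype.card F - 1 - d 0 ≤ 3; omega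
      · show Fintype.card F - 1 - d 1 ≤ 3; omega
      · show Fintype.card F - 1 - d 2 ≤ 3; omega
    have h1 := hcoeff (fun i => Fintype.card F - 1 - d i) he3
    rw [heq] at h1
    rw [h1, hzeroS _ _ _ htot hz, neg_zero]
  -- support bounds
  have hsupp_le : ∀ d ∈ f₃.support, ∀ i, d i ≤ Fintype.card F - 1 := by
    intro d hd i
    have h1 : d i ≤ f₃.degreeOf i := by
      rw [MvPolynomial.degreeOf_eq_sup]
      exact Finset.le_sup (f := fun m => m i) hd
    have := hred₃ i
    omega
  have hDin : (Finsupp.equivFunOnFinite.symm fun _ : Fin 3 => Fintype.card F - 2)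
      ∈ f₃.support := by
    rw [MvPolynomial.mem_support_iff, hcoeffD]
    exact h4
  refine ⟨?_, ?_, hcoeffD, ?_⟩
  · -- total degree
    apply le_antisymm
    · rw [MvPolynomial.totalDegree]
      apply Finset.sup_le
      intro d hd
      rw [hdsum d]
      by_contra hgt
      push_neg at hgt
      have hle := hsupp_le d hd
      have h0 := hle 0
      have h1 := hle 1
      have h2 := hle 2
      have hz : (Fintype.card F - 1 - d 0) = 0 ∨ (Fintype.card F - 1 - d 1) = 0 ∨
          (Fintype.card F - 1 - d 2) = 0 := by omega
      have : f₃.coeff d = 0 := hgen d hle (by omega) hz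
      exact (MvPolynomial.mem_support_iff.mp hd) this
    · have h1 := MvPolynomial.le_totalDegree hDin
      rw [hdsum] at h1
      have hDi : ∀ i : Fin 3,
          (Finsupp.equivFunOnFinite.symm fun _ : Fin 3 => Fintype.card F - 2) i
            = Fintype.card F - 2 := fun i => rfl
      rw [hDi 0, hDi 1, hDi 2] at h1
      omega
  · -- local permutation polynomial
    intro i x
    have hTb : Function.Bijective (lppTf F) := lppTf_invol.bijective
    have hib : Function.Bijective (fun a : F => a⁻¹) := inv_involutive.bijective
    have haddr : ∀ k : F, Function.Bijective (fun a : F => a + k) :=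
      fun k => (Equiv.addRight k).bijective
    have haddl : ∀ k : F, Function.Bijective (fun a : F => k + a) :=
      fun k => (Equiv.addLeft k).bijective
    fin_cases i
    · show Function.Bijective fun c : F => eval (Function.update x 0 c) f₃
      have hfun : (fun c : F => eval (Function.update x 0 c) f₃)
          = fun c : F => lppTf F ((lppTf F (c⁻¹ + (x 1)⁻¹))⁻¹ + (x 2)⁻¹) := by
        funext c
        rw [heval₃ (Function.update x 0 c), Function.update_self,
          Function.update_of_ne (by decide : (1 : Fin 3) ≠ 0),
          Function.update_of_ne (by decide : (2 : Fin 3) ≠ 0)]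
      rw [hfun]
      exact hTb.comp ((haddr ((x 2)⁻¹)).comp (hib.comp (hTb.comp
        ((haddr ((x 1)⁻¹)).comp hib))))
    · show Function.Bijective fun c : F => eval (Function.update x 1 c) f₃
      have hfun : (fun c : F => eval (Function.update x 1 c) f₃)
          = fun c : F => lppTf F ((lppTf F ((x 0)⁻¹ + c⁻¹))⁻¹ + (x 2)⁻¹) := by
        funext c
        rw [heval₃ (Function.update x 1 c), Function.update_self,
          Function.update_of_ne (by decide : (0 : Fin 3) ≠ 1),
          Function.update_of_ne (by decide : (2 : Fin 3) ≠ 1)]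
      rw [hfun]
      exact hTb.comp ((haddr ((x 2)⁻¹)).comp (hib.comp (hTb.comp
        ((haddl ((x 0)⁻¹)).comp hib))))
    · show Function.Bijective fun c : F => eval (Function.update x 2 c) f₃
      have hfun : (fun c : F => eval (Function.update x 2 c) f₃)
          = fun c : F => lppTf F ((lppTf F ((x 0)⁻¹ + (x 1)⁻¹))⁻¹ + c⁻¹) := by
        funext c
        rw [heval₃ (Function.update x 2 c), Function.update_self,
          Function.update_of_ne (by decide : (0 : Fin 3) ≠ 2),
          Function.update_of_ne (by decide : (1 : Fin 3) ≠ 2)]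
      rw [hfun]
      exact hTb.comp ((haddl ((lppTf F ((x 0)⁻¹ + (x 1)⁻¹))⁻¹)).comp hib)
  · -- all other coefficients in top degree vanish
    intro d hsumd hne
    have hsum' : d 0 + d 1 + d 2 = 3 * (Fintype.card F - 2) := by
      rw [← hdsum d]; exact hsumd
    by_cases hbig : ∀ i, d i ≤ Fintype.card F - 1
    · have h0 := hbig 0
      have h1 := hbig 1
      have h2 := hbig 2
      have htot : (Fintype.card F - 1 - d 0) + (Fintype.card F - 1 - d 1)
          + (Fintype.card F - 1 - d 2) ≤ 3 := by omega
      by_cases hz : (Fintype.card F - 1 - d 0) = 0 ∨ (Fintype.card F - 1 - d 1) = 0 ∨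
          (Fintype.card F - 1 - d 2) = 0
      · exact hgen d hbig htot hz
      · push_neg at hz
        obtain ⟨hz0, hz1, hz2⟩ := hz
        exfalso
        apply hne
        ext i
        fin_cases i
        · show d 0 = Fintype.card F - 2
          omega
        · show d 1 = Fintype.card F - 2
          omega
        · show d 2 = Fintype.card F - 2
          omega
    · push_neg at hbig
      obtain ⟨i, hi⟩ := hbig
      by_contra hc
      have hd : d ∈ f₃.support := MvPolynomial.mem_support_iff.mpr hc
      have := hsupp_le d hd i
      omega
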